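/- Let m > 0, 0 < r_ℓ < r_h, and let ρ = 1/(2 - r_ℓ/r_h) and p* = m·(1 - r_ℓ/r_h)/(2 - r_ℓ/r_h). Then for every x ∈ (0, m]: (i) CP_o(p*;(x,0)) = min{x, m-p*}/x ≥ ρ, and (ii) CP_u(p*;(x,m)) = (max{p*, m-x}·r_h + min{x, m-p*}·r_ℓ)/(m·r_h) ≥ ρ. -/
import Mathlib


theorem stmt_9 (m rh rl x : ℝ) (hm : 0 < m) (hrl : 0 < rl) (hlh : rl < rh)
    (hx0 : 0 < x) (hxm : x ≤ m) :
    min x (m - m * (1 - rl / rh) / (2 - rl / rh)) / x ≥ 1 / (2 - rl / rh) ∧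
    (max (m * (1 - rl / rh) / (2 - rl / rh)) (m - x) * rh +
        min x (m - m * (1 - rl / rh) / (2 - rl / rh)) * rl) / (m * rh) ≥
      1 / (2 - rl / rh) := by
  have hrh : 0 < rh := hrl.trans hlh
  have ht0 : 0 < rl / rh := div_pos hrl hrh
  have ht1 : rl / rh < 1 := (div_lt_one hrh).2 hlh
  have h2 : 0 < 2 - rl / rh := by linarith
  have hrl' : rl = (rl / rh) * rh := by field_simp
  have h2r : rh * 2 - rl ≠ 0 := by nlinarith
  have hmp : m - m * (1 - rl / rh) / (2 - rl / rh) = m / (2 - rl / rh) := by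
    rw [eq_div_iff h2.ne', sub_mul, div_mul_cancel₀ _ h2.ne']
    ring
  constructor
  · rcases le_total x (m - m * (1 - rl / rh) / (2 - rl / rh)) with h | h
    · rw [min_eq_left h, div_self hx0.ne']
      rw [ge_iff_le, div_le_one h2]; linarith
    · rw [min_eq_right h, hmp, ge_iff_le, div_le_div_iff₀ h2 hx0, div_mul_eq_mul_div,
        le_div_iff₀ h2]
      nlinarith
  · rw [ge_iff_le, div_le_div_iff₀ h2 (by positivity)]
    rcases le_total x (m - m * (1 - rl / rh) / (2 - rl / rh)) with h | h
    · rw [min_eq_left h]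
      have hmax : m - x ≤ max (m * (1 - rl / rh) / (2 - rl / rh)) (m - x) := le_max_right _ _
      have hx' : x * (2 - rl / rh) ≤ m := by
        rw [hmp, le_div_iff₀ h2] at h; linarith
      nlinarith [mul_le_mul_of_nonneg_right hmax (by positivity : (0:ℝ) ≤ rh * (2 - rl/rh)),
        mul_le_mul_of_nonneg_right hx' (sub_pos.2 hlh).le]
    · rw [min_eq_right h, hmp]
      have hmax : m * (1 - rl / rh) / (2 - rl / rh) ≤ max (m * (1 - rl / rh) / (2 - rl / rh)) (m - x) := le_max_left _ _
      have key : m * (1 - rl / rh) / (2 - rl / rh) * rh + m / (2 - rl / rh) * rl = m * rh / (2 - rl / rh) := by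
        field_simp; ring
      nlinarith [mul_le_mul_of_nonneg_right hmax (by positivity : (0:ℝ) ≤ rh * (2 - rl/rh)),
        mul_pos hm hrh, div_mul_cancel₀ (m * rh) h2.ne']
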